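/- arXiv:2108.07045 — 3 statements merged into one kernel-verified Lean document; each statement's English description precedes it below -/
import Mathlib

section
/- The optimal objective function values of the integer programs PC1 and PC2 coincide, i.e. OPT(PC1) = OPT(PC2). Moreover, a binary vector y* with Σ_{j∈J} y*_j = p is part of an optimal integer-feasible solution of PC1 if and only if it is part of an optimal integer-feasible solution of PC2. -/
open Finset

/-- Integer feasibility for the IP formulation PC1. -/
def PC1Int {I J : Type*} [Fintype I] [Fintype J] (d : I → J → ℝ) (p : ℕ)
    (x : I → J → ℝ) (y : J → ℝ) (z : ℝ) : Prop :=
  (∀ i j, x i j = 0 ∨ x i j = 1) ∧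
  (∀ j, y j = 0 ∨ y j = 1) ∧
  (∑ j, y j = (p : ℝ)) ∧
  (∀ i, ∑ j, x i j = 1) ∧
  (∀ i j, x i j ≤ y j) ∧
  (∀ i, ∑ j, d i j * x i j ≤ z)

/-- Integer feasibility for the IP formulation PC2. -/
def PC2Int {I J : Type*} [Fintype I] [Fintype J] (d : I → J → ℝ) (p : ℕ)
    (y : J → ℝ) (z : ℝ) : Prop :=
  (∀ j, y j = 0 ∨ y j = 1) ∧
  (∑ j, y j = (p : ℝ)) ∧
  (∀ i j, d i j - ∑ j' ∈ univ.filter (fun j' => d i j' < d i j),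
      (d i j - d i j') * y j' ≤ z)

lemma pc1_to_pc2 {I J : Type*} [Fintype I] [Fintype J] {d : I → J → ℝ}
    (hd : ∀ i j, 0 ≤ d i j) {p : ℕ} {x : I → J → ℝ} {y : J → ℝ} {z : ℝ}
    (h : PC1Int d p x y z) : PC2Int d p y z := by
  obtain ⟨hx, hy, hs, hrow, hxy, hz⟩ := h
  refine ⟨hy, hs, ?_⟩
  intro i j
  have hxnn : ∀ i j, (0:ℝ) ≤ x i j := by
    intro i j; rcases hx i j with h | h <;> simp [h]
  have hynn : ∀ j, (0:ℝ) ≤ y j := by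
    intro j; rcases hy j with h | h <;> simp [h]
  -- find the facility customer i is assigned to
  have hex : ∃ j0, x i j0 = 1 := by
    by_contra hc
    push_neg at hc
    have h0 : ∀ j0, x i j0 = 0 := fun j0 => (hx i j0).resolve_right (hc j0)
    have hz0 : ∑ j, x i j = 0 := Finset.sum_eq_zero fun j _ => h0 j
    rw [hrow i] at hz0; norm_num at hz0
  obtain ⟨j0, hj0⟩ := hex
  have hyj0 : y j0 = 1 := by
    rcases hy j0 with h0 | h1
    · have := hxy i j0; rw [hj0, h0] at this; linarith
    · exact h1
  have hdz : d i j0 ≤ z := by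
    have h1 : d i j0 * x i j0 ≤ ∑ j, d i j * x i j :=
      Finset.single_le_sum (f := fun j => d i j * x i j)
        (fun j _ => mul_nonneg (hd i j) (hxnn i j)) (mem_univ j0)
    rw [hj0, mul_one] at h1
    linarith [hz i]
  set S := ∑ j' ∈ univ.filter (fun j' => d i j' < d i j), (d i j - d i j') * y j' with hS
  have hSnn : 0 ≤ S := by
    apply Finset.sum_nonneg
    intro j' hj'
    have := (mem_filter.mp hj').2
    exact mul_nonneg (by linarith) (hynn j')
  by_cases hlt : d i j0 < d i j
  · have hmem : j0 ∈ univ.filter (fun j' => d i j' < d i j) :=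
      mem_filter.mpr ⟨mem_univ _, hlt⟩
    have h2 : (d i j - d i j0) * y j0 ≤ S :=
      Finset.single_le_sum (f := fun j' => (d i j - d i j') * y j')
        (fun j' hj' => mul_nonneg (by linarith [(mem_filter.mp hj').2]) (hynn j')) hmem
    rw [hyj0, mul_one] at h2
    linarith
  · push_neg at hlt
    linarith

lemma pc2_to_pc1 {I J : Type*} [Fintype I] [Fintype J] {d : I → J → ℝ}
    {p : ℕ} (hp1 : 1 ≤ p) {y : J → ℝ} {z : ℝ}
    (h : PC2Int d p y z) : ∃ x, PC1Int d p x y z := by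
  classical
  obtain ⟨hy, hs, hz⟩ := h
  have hSne : (univ.filter (fun j => y j = 1)).Nonempty := by
    by_contra hc
    rw [Finset.not_nonempty_iff_eq_empty, Finset.filter_eq_empty_iff] at hc
    have h0 : ∀ j, y j = 0 := fun j => (hy j).resolve_right (hc (mem_univ j))
    have hzero : (p:ℝ) = 0 := by
      rw [← hs]; exact Finset.sum_eq_zero fun j _ => h0 j
    have : p = 0 := Nat.cast_eq_zero.mp hzero
    omega
  choose j0 hj0mem hj0min using fun i => Finset.exists_min_image _ (d i) hSne
  have hyj0 : ∀ i, y (j0 i) = 1 := fun i => (mem_filter.mp (hj0mem i)).2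
  refine ⟨fun i j => if j = j0 i then 1 else 0, ?_, hy, hs, ?_, ?_, ?_⟩
  · intro i j; by_cases hj : j = j0 i <;> simp [hj]
  · intro i; simp
  · intro i j
    by_cases hj : j = j0 i
    · simp [hj, hyj0 i]
    · simp only [hj, if_false]
      rcases hy j with h | h <;> simp [h]
  · intro i
    have hsum : ∑ j, d i j * (if j = j0 i then 1 else 0) = d i (j0 i) := by
      rw [Finset.sum_eq_single (j0 i)]
      · simp
      · intro b _ hb; simp [hb]
      · intro habs; exact absurd (mem_univ _) habs
    rw [hsum]
    have hcon := hz i (j0 i)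
    have hS0 : ∑ j' ∈ univ.filter (fun j' => d i j' < d i (j0 i)),
        (d i (j0 i) - d i j') * y j' = 0 := by
      apply Finset.sum_eq_zero
      intro j' hj'
      have hlt := (mem_filter.mp hj').2
      rcases hy j' with h0 | h1
      · simp [h0]
      · exfalso
        have := hj0min i j' (mem_filter.mpr ⟨mem_univ _, h1⟩)
        linarith
    rw [hS0] at hcon
    linarith

/-- `OPT(PC1) = OPT(PC2)`, and a binary vector `y*` with `Σ y*_j = p` is part of an
optimal integer-feasible solution of PC1 iff it is part of an optimal integer-feasible solution
of PC2. -/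
theorem stmt_3 {I J : Type*} [Fintype I] [Fintype J] [Nonempty I] [Nonempty J]
    (d : I → J → ℝ) (hd : ∀ i j, 0 ≤ d i j)
    (p : ℕ) (hp1 : 1 ≤ p) (hp2 : p ≤ Fintype.card J) :
    sInf {z : ℝ | ∃ x y, PC1Int d p x y z} = sInf {z : ℝ | ∃ y, PC2Int d p y z} ∧
    ∀ y : J → ℝ, (∀ j, y j = 0 ∨ y j = 1) → (∑ j, y j = (p : ℝ)) →
      ((∃ x z, PC1Int d p x y z ∧
          ∀ (x' : I → J → ℝ) (y' : J → ℝ) (z' : ℝ), PC1Int d p x' y' z' → z ≤ z') ↔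
        (∃ z, PC2Int d p y z ∧
          ∀ (y' : J → ℝ) (z' : ℝ), PC2Int d p y' z' → z ≤ z')) := by
  constructor
  · have hset : {z : ℝ | ∃ x y, PC1Int d p x y z} = {z : ℝ | ∃ y, PC2Int d p y z} := by
      ext z
      simp only [Set.mem_setOf_eq]
      constructor
      · rintro ⟨x, y, h⟩
        exact ⟨y, pc1_to_pc2 hd h⟩
      · rintro ⟨y, h⟩
        obtain ⟨x, hx⟩ := pc2_to_pc1 hp1 h
        exact ⟨x, y, hx⟩
    rw [hset]
  · intro y _ _
    constructor
    · rintro ⟨x, z, hfeas, hopt⟩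
      refine ⟨z, pc1_to_pc2 hd hfeas, ?_⟩
      intro y' z' h'
      obtain ⟨x', hx'⟩ := pc2_to_pc1 hp1 h'
      exact hopt x' y' z' hx'
    · rintro ⟨z, hfeas, hopt⟩
      obtain ⟨x, hx⟩ := pc2_to_pc1 hp1 hfeas
      exact ⟨x, z, hx, fun x' y' z' h' => hopt y' z' (pc1_to_pc2 hd h')⟩
end

section
/- Let LB ≥ 0 be a lower bound on OPT(PC2), i.e. LB ≤ OPT(PC2). Then the restricted linear program defining L'(LB) is a relaxation of PC2, and in particular LB ≤ L'(LB) ≤ L(LB) and L'(LB) ≤ OPT(PC2). Furthermore, L'(LB) = LB holds if and only if there exists a fractional set cover solution with radius LB that uses at most p sets. -/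
open Finset

/-- Feasibility for the linear program PCLB. -/
def PCLBFeas {I J : Type*} [Fintype I] [Fintype J] (d : I → J → ℝ) (p : ℕ) (LB : ℝ)
    (y : J → ℝ) (z : ℝ) : Prop :=
  (∑ j, y j = (p : ℝ)) ∧
  (∀ i j, LB < d i j →
    d i j - ∑ j' ∈ univ.filter (fun j' => d i j' < d i j),
        (d i j - max LB (d i j')) * y j' ≤ z) ∧
  LB ≤ z ∧
  (∀ j, 0 ≤ y j ∧ y j ≤ 1)

/-- Feasibility for the restricted linear program defining `L'(LB)`: the cut for customer `i`
is only imposed for the closest location `j` with `d_{ij} > LB` (i.e. `d_{ij} = d_i*`). -/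
def PCLBRestrFeas {I J : Type*} [Fintype I] [Fintype J] (d : I → J → ℝ) (p : ℕ) (LB : ℝ)
    (y : J → ℝ) (z : ℝ) : Prop :=
  (∑ j, y j = (p : ℝ)) ∧
  (∀ i j, LB < d i j → (∀ j', LB < d i j' → d i j ≤ d i j') →
    d i j - ∑ j' ∈ univ.filter (fun j' => d i j' < d i j),
        (d i j - max LB (d i j')) * y j' ≤ z) ∧
  LB ≤ z ∧
  (∀ j, 0 ≤ y j ∧ y j ≤ 1)

section Aux
variable {I J : Type*} [Fintype I] [Fintype J] [Nonempty I] [Nonempty J]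

/-- Any PC2-feasible z is nonnegative. -/
lemma pc2_z_nonneg (d : I → J → ℝ) (hd : ∀ i j, 0 ≤ d i j) (p : ℕ)
    {y : J → ℝ} {z : ℝ} (h : PC2Int d p y z) : 0 ≤ z := by
  obtain ⟨i⟩ := ‹Nonempty I›
  obtain ⟨j0, -, hj0⟩ := Finset.exists_min_image (univ : Finset J) (fun j => d i j)
    univ_nonempty
  have h3 := h.2.2 i j0
  have hfe : (univ.filter (fun j' => d i j' < d i j0)) = ∅ := by
    rw [Finset.filter_eq_empty_iff]
    intro j' _
    exact not_lt.2 (hj0 j' (mem_univ j'))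
  rw [hfe] at h3
  simp at h3
  exact le_trans (hd i j0) h3

/-- PC2 is integer-feasible. -/
lemma pc2_nonempty (d : I → J → ℝ) (hd : ∀ i j, 0 ≤ d i j) (p : ℕ)
    (hp2 : p ≤ Fintype.card J) : ∃ y z, PC2Int d p y z := by
  classical
  obtain ⟨s, -, hs⟩ := Finset.exists_subset_card_eq (le_trans hp2 (le_of_eq (Finset.card_univ (α := J)).symm))
  refine ⟨fun j => if j ∈ s then 1 else 0,
    (univ : Finset (I × J)).sup' (univ_nonempty) (fun ij => d ij.1 ij.2), ?_, ?_, ?_⟩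
  · intro j; by_cases hj : j ∈ s <;> simp [hj]
  · rw [Finset.sum_ite_mem]
    simp [Finset.univ_inter, hs]
  · intro i j
    have h1 : (0:ℝ) ≤ ∑ j' ∈ univ.filter (fun j' => d i j' < d i j), (d i j - d i j') * (if j' ∈ s then (1:ℝ) else 0) := by
      apply Finset.sum_nonneg
      intro j' hj'
      rw [Finset.mem_filter] at hj'
      have : 0 ≤ d i j - d i j' := by linarith [hj'.2]
      positivity
    have h2 : d i j ≤ (univ : Finset (I × J)).sup' (univ_nonempty) (fun ij => d ij.1 ij.2) :=
      Finset.le_sup' (fun ij : I × J => d ij.1 ij.2) (mem_univ (i, j))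
    linarith

end Aux

section Aux2
variable {I J : Type*} [Fintype I] [Fintype J] [Nonempty I] [Nonempty J]

/-- PC2 integer solutions (with z above LB) are feasible for the restricted LP. -/
lemma pc2_to_restr (d : I → J → ℝ) (p : ℕ) (LB : ℝ)
    {y : J → ℝ} {z : ℝ} (h : PC2Int d p y z) (hz : LB ≤ z) :
    PCLBRestrFeas d p LB y z := by
  obtain ⟨hbin, hsum, hcon⟩ := h
  have hy01 : ∀ j, 0 ≤ y j ∧ y j ≤ 1 := by
    intro j; rcases hbin j with h0 | h0 <;> simp [h0]
  refine ⟨hsum, ?_, hz, hy01⟩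
  intro i j hij hmin
  by_cases hex : ∃ j0, d i j0 ≤ LB ∧ y j0 = 1
  · obtain ⟨j0, hj0, hy0⟩ := hex
    have hj0mem : j0 ∈ univ.filter (fun j' => d i j' < d i j) := by
      simp [Finset.mem_filter]
      linarith
    have hterm : ∀ j' ∈ univ.filter (fun j' => d i j' < d i j),
        0 ≤ (d i j - max LB (d i j')) * y j' := by
      intro j' hj'
      rw [Finset.mem_filter] at hj'
      have : max LB (d i j') ≤ d i j := max_le hij.le hj'.2.le
      have := (hy01 j').1
      nlinarith
    have hsingle : (d i j - max LB (d i j0)) * y j0 ≤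
        ∑ j' ∈ univ.filter (fun j' => d i j' < d i j), (d i j - max LB (d i j')) * y j' :=
      Finset.single_le_sum hterm hj0mem
    have hmax : max LB (d i j0) = LB := max_eq_left hj0
    rw [hmax, hy0, mul_one] at hsingle
    linarith
  · push_neg at hex
    have hzero : ∀ j0, d i j0 ≤ LB → y j0 = 0 := by
      intro j0 hj0
      rcases hbin j0 with h0 | h1
      · exact h0
      · exact absurd h1 (hex j0 hj0)
    have heq : ∑ j' ∈ univ.filter (fun j' => d i j' < d i j), (d i j - max LB (d i j')) * y j'
        = ∑ j' ∈ univ.filter (fun j' => d i j' < d i j), (d i j - d i j') * y j' := by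
      apply Finset.sum_congr rfl
      intro j' _
      by_cases hle : d i j' ≤ LB
      · rw [hzero j' hle]; ring
      · rw [max_eq_right (le_of_not_ge hle)]
    rw [heq]
    exact hcon i j

/-- Padding a subprobability vector up to total mass p. -/
lemma pad_exists (p : ℕ) (hp2 : p ≤ Fintype.card J) (y : J → ℝ)
    (hy : ∀ j, 0 ≤ y j ∧ y j ≤ 1) (hs : ∑ j, y j ≤ (p : ℝ)) :
    ∃ y' : J → ℝ, (∀ j, 0 ≤ y' j ∧ y' j ≤ 1) ∧ (∑ j, y' j = (p : ℝ)) ∧ ∀ j, y j ≤ y' j := by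
  set n : ℝ := (Fintype.card J : ℝ) with hn
  set s : ℝ := ∑ j, y j with hsdef
  have hsn : s ≤ n := by
    have : ∑ j, y j ≤ ∑ _j : J, (1 : ℝ) := Finset.sum_le_sum (fun j _ => (hy j).2)
    simpa [hn] using this
  have hpn : (p : ℝ) ≤ n := by rw [hn]; exact_mod_cast hp2
  by_cases hcase : s = n
  · have hps : (p : ℝ) = s := le_antisymm (hcase ▸ hpn) hs
    exact ⟨y, hy, hps.symm, fun j => le_refl _⟩
  · have hlt : s < n := lt_of_le_of_ne hsn hcase
    set t : ℝ := ((p : ℝ) - s) / (n - s) with ht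
    have hns : (0:ℝ) < n - s := by linarith
    have ht0 : 0 ≤ t := div_nonneg (by linarith) hns.le
    have ht1 : t ≤ 1 := by rw [div_le_one hns]; linarith
    refine ⟨fun j => y j + t * (1 - y j), ?_, ?_, ?_⟩
    · intro j
      have h1 := (hy j).1; have h2 := (hy j).2
      dsimp only
      constructor
      · nlinarith [mul_nonneg ht0 (by linarith : (0:ℝ) ≤ 1 - y j)]
      · nlinarith [mul_nonneg (by linarith : (0:ℝ) ≤ 1 - t) (by linarith : (0:ℝ) ≤ 1 - y j)]
    · have h1 : ∑ x : J, ((1:ℝ) - y x) = n - s := by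
        rw [Finset.sum_sub_distrib]
        simp [hn, hsdef]
      have hsum : ∑ j, (y j + t * (1 - y j)) = s + t * (n - s) := by
        rw [Finset.sum_add_distrib, ← Finset.mul_sum, h1, ← hsdef]
      rw [hsum, ht, div_mul_cancel₀ _ hns.ne']
      ring
    · intro j
      have h2 := (hy j).2
      dsimp only
      nlinarith [mul_nonneg ht0 (by linarith : (0:ℝ) ≤ 1 - y j)]

end Aux2

section Aux3
variable {I J : Type*} [Fintype I] [Fintype J] [Nonempty I] [Nonempty J]

open scoped Classical in
/-- The set of restricted constraints. -/
noncomputable def restrCS (d : I → J → ℝ) (LB : ℝ) : Finset (I × J) :=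
  univ.filter (fun c => LB < d c.1 c.2 ∧ ∀ j', LB < d c.1 j' → d c.1 c.2 ≤ d c.1 j')

/-- The left-hand side of a restricted constraint. -/
noncomputable def lhsFun (d : I → J → ℝ) (LB : ℝ) (c : I × J) (y : J → ℝ) : ℝ :=
  d c.1 c.2 - ∑ j' ∈ univ.filter (fun j' => d c.1 j' < d c.1 c.2),
      (d c.1 c.2 - max LB (d c.1 j')) * y j'

/-- The minimal feasible z for a given y. -/
noncomputable def gFun (d : I → J → ℝ) (LB : ℝ) (y : J → ℝ) : ℝ :=
  (restrCS d LB).fold max LB (fun c => lhsFun d LB c y)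

lemma restrFeas_iff (d : I → J → ℝ) (p : ℕ) (LB : ℝ) (y : J → ℝ) (z : ℝ) :
    PCLBRestrFeas d p LB y z ↔
      ((∑ j, y j = (p : ℝ)) ∧ (∀ j, 0 ≤ y j ∧ y j ≤ 1)) ∧ gFun d LB y ≤ z := by
  classical
  rw [gFun, Finset.fold_max_le]
  constructor
  · rintro ⟨hsum, hcon, hz, hy⟩
    refine ⟨⟨hsum, hy⟩, hz, ?_⟩
    intro c hc
    rw [restrCS, Finset.mem_filter] at hc
    exact hcon c.1 c.2 hc.2.1 hc.2.2
  · rintro ⟨⟨hsum, hy⟩, hz, hcon⟩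
    refine ⟨hsum, ?_, hz, hy⟩
    intro i j h1 h2
    exact hcon (i, j) (by rw [restrCS, Finset.mem_filter]; exact ⟨mem_univ _, h1, h2⟩)

lemma gFun_continuous (d : I → J → ℝ) (LB : ℝ) : Continuous (gFun d LB) := by
  classical
  have hlhs : ∀ c : I × J, Continuous (lhsFun d LB c) := by
    intro c
    apply Continuous.sub continuous_const
    exact continuous_finset_sum _ (fun j' _ => continuous_const.mul (continuous_apply j'))
  suffices h : ∀ s : Finset (I × J), Continuous (fun y => s.fold max LB (fun c => lhsFun d LB c y)) by
    exact h _
  intro s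
  induction s using Finset.induction_on with
  | empty => simpa using continuous_const
  | insert a s' hnotmem ih =>
      have : (fun y => (insert a s').fold max LB (fun c => lhsFun d LB c y))
          = fun y => max (lhsFun d LB a y) (s'.fold max LB (fun c => lhsFun d LB c y)) := by
        funext y
        rw [Finset.fold_insert hnotmem]
      rw [this]
      exact (hlhs a).max ih

lemma gFun_exists_min (d : I → J → ℝ) (p : ℕ) (hp2 : p ≤ Fintype.card J) :
    ∀ LB : ℝ, ∃ y0 : J → ℝ, ((∑ j, y0 j = (p : ℝ)) ∧ (∀ j, 0 ≤ y0 j ∧ y0 j ≤ 1)) ∧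
      ∀ y : J → ℝ, ((∑ j, y j = (p : ℝ)) ∧ (∀ j, 0 ≤ y j ∧ y j ≤ 1)) →
        gFun d LB y0 ≤ gFun d LB y := by
  intro LB
  set K : Set (J → ℝ) := {y | (∑ j, y j = (p : ℝ)) ∧ (∀ j, 0 ≤ y j ∧ y j ≤ 1)}
  have hKsub : K ⊆ Set.univ.pi (fun _ : J => Set.Icc (0:ℝ) 1) := by
    intro y hy
    rw [Set.mem_univ_pi]
    intro j
    exact Set.mem_Icc.2 (hy.2 j)
  have hKclosed : IsClosed K := by
    have h1 : IsClosed {y : J → ℝ | ∑ j, y j = (p : ℝ)} :=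
      isClosed_eq (continuous_finset_sum _ (fun j _ => continuous_apply j)) continuous_const
    have h2 : IsClosed {y : J → ℝ | ∀ j, 0 ≤ y j ∧ y j ≤ 1} := by
      have : {y : J → ℝ | ∀ j, 0 ≤ y j ∧ y j ≤ 1}
          = Set.univ.pi (fun _ : J => Set.Icc (0:ℝ) 1) := by
        ext y
        rw [Set.mem_univ_pi]
        exact forall_congr' (fun j => Set.mem_Icc.symm)
      rw [this]
      exact isClosed_set_pi (fun j _ => isClosed_Icc)
    exact h1.inter h2
  have hKcompact : IsCompact K :=
    IsCompact.of_isClosed_subset (isCompact_univ_pi (fun _ => isCompact_Icc)) hKclosed hKsub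
  have hKne : K.Nonempty := by
    refine ⟨fun _ => (p : ℝ) / (Fintype.card J : ℝ), ?_, ?_⟩
    · have hcard : (0:ℝ) < (Fintype.card J : ℝ) := by
        exact_mod_cast Fintype.card_pos
      rw [Finset.sum_const, Finset.card_univ, nsmul_eq_mul]
      field_simp
    · intro j
      have hcard : (0:ℝ) < (Fintype.card J : ℝ) := by
        exact_mod_cast Fintype.card_pos
      constructor
      · positivity
      · rw [div_le_one hcard]
        exact_mod_cast hp2
  obtain ⟨y0, hy0K, hy0min⟩ := hKcompact.exists_isMinOn hKne (gFun_continuous d LB).continuousOn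
  exact ⟨y0, hy0K, fun y hy => hy0min hy⟩

end Aux3

section Aux4
variable {I J : Type*} [Fintype I] [Fintype J] [Nonempty I] [Nonempty J]

/-- A fractional set cover with radius LB yields a restricted-feasible point with z = LB. -/
lemma cover_to_restr (d : I → J → ℝ) (p : ℕ) (hp2 : p ≤ Fintype.card J) (LB : ℝ)
    (y : J → ℝ) (hy : ∀ j, 0 ≤ y j ∧ y j ≤ 1)
    (hcov : ∀ i : I, 1 ≤ ∑ j ∈ univ.filter (fun j => d i j ≤ LB), y j)
    (hsle : ∑ j, y j ≤ (p : ℝ)) :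
    ∃ y' : J → ℝ, PCLBRestrFeas d p LB y' LB := by
  obtain ⟨y', hy', hsum', hmono⟩ := pad_exists p hp2 y hy hsle
  refine ⟨y', hsum', ?_, le_refl _, hy'⟩
  intro i j hij _
  set F := univ.filter (fun j' => d i j' < d i j) with hF
  set A := univ.filter (fun j' : J => d i j' ≤ LB) with hA
  have hAF : A ⊆ F := by
    intro j' hj'
    rw [hA, Finset.mem_filter] at hj'
    rw [hF, Finset.mem_filter]
    exact ⟨mem_univ _, lt_of_le_of_lt hj'.2 hij⟩
  have hstep1 : ∑ j' ∈ A, (d i j - max LB (d i j')) * y' j'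
      ≤ ∑ j' ∈ F, (d i j - max LB (d i j')) * y' j' := by
    apply Finset.sum_le_sum_of_subset_of_nonneg hAF
    intro j' hj' _
    rw [hF, Finset.mem_filter] at hj'
    have : max LB (d i j') ≤ d i j := max_le hij.le hj'.2.le
    have := (hy' j').1
    nlinarith
  have hstep2 : (d i j - LB) * ∑ j' ∈ A, y j' ≤ ∑ j' ∈ A, (d i j - max LB (d i j')) * y' j' := by
    rw [Finset.mul_sum]
    apply Finset.sum_le_sum
    intro j' hj'
    rw [hA, Finset.mem_filter] at hj'
    rw [max_eq_left hj'.2]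
    have h1 := (hy j').1
    have h2 := hmono j'
    nlinarith
  have hcov' : (d i j - LB) * 1 ≤ (d i j - LB) * ∑ j' ∈ A, y j' := by
    apply mul_le_mul_of_nonneg_left (hcov i) (by linarith)
  linarith

/-- A restricted-feasible point with z = LB yields a fractional set cover. -/
lemma restr_to_cover (d : I → J → ℝ) (p : ℕ) (hp1 : 1 ≤ p) (LB : ℝ)
    (y : J → ℝ) (h : PCLBRestrFeas d p LB y LB) :
    (∀ j, 0 ≤ y j ∧ y j ≤ 1) ∧
    (∀ i : I, 1 ≤ ∑ j ∈ univ.filter (fun j => d i j ≤ LB), y j) ∧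
    ∑ j, y j ≤ (p : ℝ) := by
  obtain ⟨hsum, hcon, -, hy⟩ := h
  refine ⟨hy, ?_, le_of_eq hsum⟩
  intro i
  by_cases hex : ∃ j, LB < d i j
  · have hne : (univ.filter (fun j => LB < d i j)).Nonempty := by
      obtain ⟨j, hj⟩ := hex
      exact ⟨j, by simp [Finset.mem_filter, hj]⟩
    obtain ⟨j0, hj0mem, hj0min⟩ := Finset.exists_min_image _ (fun j => d i j) hne
    rw [Finset.mem_filter] at hj0mem
    have hj0 : LB < d i j0 := hj0mem.2
    have hmin : ∀ j', LB < d i j' → d i j0 ≤ d i j' := by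
      intro j' hj'
      exact hj0min j' (by simp [Finset.mem_filter, hj'])
    have hc := hcon i j0 hj0 hmin
    set F := univ.filter (fun j' => d i j' < d i j0) with hF
    have hFle : ∀ j' ∈ F, d i j' ≤ LB := by
      intro j' hj'
      rw [hF, Finset.mem_filter] at hj'
      by_contra hgt
      push_neg at hgt
      exact absurd (hmin j' hgt) (not_le.2 hj'.2)
    have heq : ∑ j' ∈ F, (d i j0 - max LB (d i j')) * y j' = (d i j0 - LB) * ∑ j' ∈ F, y j' := by
      rw [Finset.mul_sum]
      apply Finset.sum_congr rfl
      intro j' hj'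
      rw [max_eq_left (hFle j' hj')]
    rw [heq] at hc
    have hS : 1 ≤ ∑ j' ∈ F, y j' := by
      by_contra hlt
      push_neg at hlt
      nlinarith
    calc (1:ℝ) ≤ ∑ j' ∈ F, y j' := hS
      _ ≤ ∑ j ∈ univ.filter (fun j => d i j ≤ LB), y j := by
          apply Finset.sum_le_sum_of_subset_of_nonneg
          · intro j' hj'
            rw [Finset.mem_filter]
            exact ⟨mem_univ _, hFle j' hj'⟩
          · intro j' _ _
            exact (hy j').1
  · push_neg at hex
    have : (univ.filter (fun j : J => d i j ≤ LB)) = univ := by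
      rw [Finset.filter_eq_self]
      intro j _
      exact hex j
    rw [this, hsum]
    exact_mod_cast hp1

/-- The full LP PCLB is feasible. -/
lemma pclb_nonempty (d : I → J → ℝ) (p : ℕ) (hp2 : p ≤ Fintype.card J) (LB : ℝ) :
    ∃ y z, PCLBFeas d p LB y z := by
  have hcard : (0:ℝ) < (Fintype.card J : ℝ) := by exact_mod_cast Fintype.card_pos
  refine ⟨fun _ => (p : ℝ) / (Fintype.card J : ℝ),
    max ((univ : Finset (I × J)).sup' (univ_nonempty) (fun ij => d ij.1 ij.2)) LB, ?_, ?_, ?_, ?_⟩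
  · rw [Finset.sum_const, Finset.card_univ, nsmul_eq_mul]
    field_simp
  · intro i j hij
    have h1 : (0:ℝ) ≤ ∑ j' ∈ univ.filter (fun j' => d i j' < d i j),
        (d i j - max LB (d i j')) * ((p : ℝ) / (Fintype.card J : ℝ)) := by
      apply Finset.sum_nonneg
      intro j' hj'
      rw [Finset.mem_filter] at hj'
      have : max LB (d i j') ≤ d i j := max_le hij.le hj'.2.le
      have : (0:ℝ) ≤ (p : ℝ) / (Fintype.card J : ℝ) := by positivity
      nlinarith
    have h2 : d i j ≤ (univ : Finset (I × J)).sup' (univ_nonempty) (fun ij => d ij.1 ij.2) :=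
      Finset.le_sup' (fun ij : I × J => d ij.1 ij.2) (mem_univ (i, j))
    have h3 := le_max_left ((univ : Finset (I × J)).sup' (univ_nonempty) (fun ij => d ij.1 ij.2)) LB
    linarith
  · exact le_max_right _ _
  · intro j
    constructor
    · positivity
    · rw [div_le_one hcard]
      exact_mod_cast hp2
end Aux4

/-- If `0 ≤ LB ≤ OPT(PC2)`, the restricted LP defining `L'(LB)` is a relaxation
of PC2, `LB ≤ L'(LB) ≤ L(LB)` and `L'(LB) ≤ OPT(PC2)`; moreover `L'(LB) = LB` iff there is a
fractional set cover solution with radius `LB` that uses at most `p` sets. -/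
theorem stmt_14 {I J : Type*} [Fintype I] [Fintype J] [Nonempty I] [Nonempty J]
    (d : I → J → ℝ) (hd : ∀ i j, 0 ≤ d i j)
    (p : ℕ) (hp1 : 1 ≤ p) (hp2 : p ≤ Fintype.card J)
    (LB : ℝ) (hLB0 : 0 ≤ LB)
    (hLB : LB ≤ sInf {z : ℝ | ∃ y, PC2Int d p y z}) :
    (∀ (y : J → ℝ) (z : ℝ), PC2Int d p y z → PCLBRestrFeas d p LB y z) ∧
    LB ≤ sInf {z : ℝ | ∃ y, PCLBRestrFeas d p LB y z} ∧
    sInf {z : ℝ | ∃ y, PCLBRestrFeas d p LB y z} ≤ sInf {z : ℝ | ∃ y, PCLBFeas d p LB y z} ∧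
    sInf {z : ℝ | ∃ y, PCLBRestrFeas d p LB y z} ≤ sInf {z : ℝ | ∃ y, PC2Int d p y z} ∧
    (sInf {z : ℝ | ∃ y, PCLBRestrFeas d p LB y z} = LB ↔
      ∃ y : J → ℝ, (∀ j, 0 ≤ y j ∧ y j ≤ 1) ∧
        (∀ i : I, 1 ≤ ∑ j ∈ univ.filter (fun j => d i j ≤ LB), y j) ∧
        ∑ j, y j ≤ (p : ℝ)) := by
  set S : Set ℝ := {z : ℝ | ∃ y, PC2Int d p y z} with hS
  set Sr : Set ℝ := {z : ℝ | ∃ y, PCLBRestrFeas d p LB y z} with hSr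
  set Sl : Set ℝ := {z : ℝ | ∃ y, PCLBFeas d p LB y z} with hSl
  have hSne : S.Nonempty := by
    obtain ⟨y, z, h⟩ := pc2_nonempty d hd p hp2
    exact ⟨z, y, h⟩
  have hSbdd : BddBelow S := by
    refine ⟨0, ?_⟩
    rintro z ⟨y, h⟩
    exact pc2_z_nonneg d hd p h
  have hzLB : ∀ z ∈ S, LB ≤ z := fun z hz => hLB.trans (csInf_le hSbdd hz)
  have part1 : ∀ (y : J → ℝ) (z : ℝ), PC2Int d p y z → PCLBRestrFeas d p LB y z :=
    fun y z h => pc2_to_restr d p LB h (hzLB z ⟨y, h⟩)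
  have hSrbdd : BddBelow Sr := by
    refine ⟨LB, ?_⟩
    rintro z ⟨y, h⟩
    exact h.2.2.1
  have hSlne : Sl.Nonempty := by
    obtain ⟨y, z, h⟩ := pclb_nonempty d p hp2 LB
    exact ⟨z, y, h⟩
  have hSlSr : Sl ⊆ Sr := by
    rintro z ⟨y, h⟩
    exact ⟨y, h.1, fun i j h1 _ => h.2.1 i j h1, h.2.2⟩
  have hSrne : Sr.Nonempty := hSlne.mono hSlSr
  have part2 : LB ≤ sInf Sr := by
    apply le_csInf hSrne
    rintro z ⟨y, h⟩
    exact h.2.2.1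
  have part3 : sInf Sr ≤ sInf Sl := csInf_le_csInf hSrbdd hSlne hSlSr
  have part4 : sInf Sr ≤ sInf S := by
    apply csInf_le_csInf hSrbdd hSne
    rintro z ⟨y, h⟩
    exact ⟨y, part1 y z h⟩
  refine ⟨part1, part2, part3, part4, ?_, ?_⟩
  · -- forward direction
    intro heq
    obtain ⟨y0, hy0K, hy0min⟩ := gFun_exists_min d p hp2 LB
    have hgle : gFun d LB y0 ≤ sInf Sr := by
      apply le_csInf hSrne
      rintro z ⟨y, h⟩
      rw [restrFeas_iff] at h
      exact le_trans (hy0min y h.1) h.2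
    rw [heq] at hgle
    have hfeas : PCLBRestrFeas d p LB y0 LB := (restrFeas_iff d p LB y0 LB).2 ⟨hy0K, hgle⟩
    obtain ⟨h1, h2, h3⟩ := restr_to_cover d p hp1 LB y0 hfeas
    exact ⟨y0, h1, h2, h3⟩
  · -- backward direction
    rintro ⟨y, hy, hcov, hsle⟩
    obtain ⟨y', hfeas⟩ := cover_to_restr d p hp2 LB y hy hcov hsle
    have hmem : LB ∈ Sr := ⟨y', hfeas⟩
    exact le_antisymm (csInf_le hSrbdd hmem) part2
end

section
/- Let d_1 < d_2 < … < d_K be the distinct elements of D and let k ∈ {1, …, K−1}. For any two values LB and LB' with d_k ≤ LB < d_{k+1} and d_k ≤ LB' < d_{k+1}, one has L(LB) = LB if and only if L(LB') = LB'. -/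
open Finset

/-- The optimal value `L(LB)` of the linear program PCLB. -/
noncomputable def Lval {I J : Type*} [Fintype I] [Fintype J] (d : I → J → ℝ) (p : ℕ)
    (LB : ℝ) : ℝ :=
  sInf {z : ℝ | ∃ y, PCLBFeas d p LB y z}

lemma feas_bddBelow {I J : Type*} [Fintype I] [Fintype J] (d : I → J → ℝ) (p : ℕ) (LB : ℝ) :
    BddBelow {z : ℝ | ∃ y, PCLBFeas d p LB y z} :=
  ⟨LB, fun _ ⟨_, hy⟩ => hy.2.2.1⟩

lemma covers_feas {I J : Type*} [Fintype I] [Fintype J] (d : I → J → ℝ) (p : ℕ)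
    (a b : ℝ) (hconsec : ∀ i j, ¬(a < d i j ∧ d i j < b))
    (LB : ℝ) (hLB1 : a ≤ LB) (hLB2 : LB < b)
    (y : J → ℝ) (hsum : ∑ j, y j = (p : ℝ)) (hbd : ∀ j, 0 ≤ y j ∧ y j ≤ 1)
    (ε : ℝ) (hε : 0 ≤ ε)
    (hcov : ∀ i, (∃ j, b ≤ d i j) →
      1 - ε ≤ ∑ j' ∈ univ.filter (fun j' => d i j' ≤ a), y j')
    (z : ℝ) (hz : LB ≤ z)
    (hz2 : ∀ i j, b ≤ d i j → LB + ε * (d i j - LB) ≤ z) :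
    PCLBFeas d p LB y z := by
  refine ⟨hsum, ?_, hz, hbd⟩
  intro i j hij
  have hb : b ≤ d i j := by
    rcases le_or_gt b (d i j) with h | h
    · exact h
    · exact absurd ⟨lt_of_le_of_lt hLB1 hij, h⟩ (hconsec i j)
  have hsub : univ.filter (fun j' => d i j' ≤ a) ⊆ univ.filter (fun j' => d i j' < d i j) := by
    intro j' hj'
    simp only [mem_filter, mem_univ, true_and] at *
    linarith
  have hstep : ∑ j' ∈ univ.filter (fun j' => d i j' ≤ a), (d i j - LB) * y j'
      ≤ ∑ j' ∈ univ.filter (fun j' => d i j' < d i j),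
          (d i j - max LB (d i j')) * y j' := by
    have hmono := Finset.sum_le_sum_of_subset_of_nonneg
      (f := fun j' => (d i j - max LB (d i j')) * y j') hsub ?_
    · refine le_trans (le_of_eq ?_) hmono
      apply Finset.sum_congr rfl
      intro j' hj'
      simp only [mem_filter, mem_univ, true_and] at hj'
      simp only [max_eq_left (hj'.trans hLB1)]
    · intro j' hj' _
      simp only [mem_filter, mem_univ, true_and] at hj'
      have hlt : max LB (d i j') < d i j := max_lt (lt_of_lt_of_le hLB2 hb) hj'
      exact mul_nonneg (by linarith) (hbd j').1
  have hcovi := hcov i ⟨j, hb⟩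
  rw [← Finset.mul_sum] at hstep
  have hdpos : (0 : ℝ) < d i j - LB := by linarith
  have hzj := hz2 i j hb
  set s := ∑ j' ∈ univ.filter (fun j' => d i j' ≤ a), y j' with hs
  nlinarith [mul_le_mul_of_nonneg_left hcovi (le_of_lt hdpos)]

lemma feas_nonempty {I J : Type*} [Fintype I] [Fintype J] [Nonempty I] [Nonempty J]
    (d : I → J → ℝ) (p : ℕ) (hp2 : p ≤ Fintype.card J)
    (a b : ℝ) (hconsec : ∀ i j, ¬(a < d i j ∧ d i j < b))
    (LB : ℝ) (hLB1 : a ≤ LB) (hLB2 : LB < b) :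
    {z : ℝ | ∃ y, PCLBFeas d p LB y z}.Nonempty := by
  have hcard : (0 : ℝ) < (Fintype.card J : ℝ) := by
    exact_mod_cast Fintype.card_pos
  set y : J → ℝ := fun _ => (p : ℝ) / (Fintype.card J : ℝ) with hy
  have hsum : ∑ j, y j = (p : ℝ) := by
    simp only [hy, Finset.sum_const, Finset.card_univ, nsmul_eq_mul]
    field_simp
  have hbd : ∀ j, 0 ≤ y j ∧ y j ≤ 1 := by
    intro j
    constructor
    · positivity
    · rw [hy, div_le_one hcard]
      exact_mod_cast hp2
  have hne : (Finset.univ : Finset (I × J)).Nonempty := Finset.univ_nonempty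
  set M : ℝ := (Finset.univ.sup' hne (fun q : I × J => d q.1 q.2)) ⊔ LB with hM
  refine ⟨M, y, covers_feas d p a b hconsec LB hLB1 hLB2 y hsum hbd 1 one_pos.le ?_ M le_sup_right ?_⟩
  · intro i _
    refine le_trans (by norm_num) (Finset.sum_nonneg ?_)
    intro j' _
    exact (hbd j').1
  · intro i j _
    have : d i j ≤ M :=
      le_trans (Finset.le_sup' (f := fun q : I × J => d q.1 q.2) (Finset.mem_univ (i, j)))
        le_sup_left
    linarith

lemma key_iff {I J : Type*} [Fintype I] [Fintype J] [Nonempty I] [Nonempty J]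
    (d : I → J → ℝ) (p : ℕ) (hp2 : p ≤ Fintype.card J)
    (a b : ℝ) (hab : a < b) (hconsec : ∀ i j, ¬(a < d i j ∧ d i j < b))
    (LB : ℝ) (hLB1 : a ≤ LB) (hLB2 : LB < b) :
    Lval d p LB = LB ↔ ∀ ε : ℝ, 0 < ε → ∃ y : J → ℝ,
      (∑ j, y j = (p : ℝ)) ∧ (∀ j, 0 ≤ y j ∧ y j ≤ 1) ∧
      ∀ i, (∃ j, b ≤ d i j) →
        1 - ε ≤ ∑ j' ∈ univ.filter (fun j' => d i j' ≤ a), y j' := by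
  have hne := feas_nonempty d p hp2 a b hconsec LB hLB1 hLB2
  have hbdd := feas_bddBelow d p LB
  constructor
  · intro hL ε hε
    have hpos : (0 : ℝ) < ε * (b - LB) := mul_pos hε (by linarith)
    obtain ⟨z, hzS, hzlt⟩ := Real.lt_sInf_add_pos hne hpos
    rw [show sInf {z : ℝ | ∃ y, PCLBFeas d p LB y z} = Lval d p LB from rfl, hL] at hzlt
    obtain ⟨y, hfeas⟩ := hzS
    refine ⟨y, hfeas.1, hfeas.2.2.2, ?_⟩
    rintro i ⟨j0, hj0⟩
    have hT : (univ.filter (fun j => b ≤ d i j)).Nonempty :=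
      ⟨j0, by simp [hj0]⟩
    obtain ⟨js, hjsT, hmin⟩ := Finset.exists_min_image _ (d i) hT
    simp only [mem_filter, mem_univ, true_and] at hjsT
    have hc := hfeas.2.1 i js (lt_of_lt_of_le hLB2 hjsT)
    have hfe : univ.filter (fun j' => d i j' < d i js)
        = univ.filter (fun j' => d i j' ≤ a) := by
      ext j'
      simp only [mem_filter, mem_univ, true_and]
      constructor
      · intro h
        by_contra hcon
        push_neg at hcon
        have hb' : b ≤ d i j' := by
          rcases le_or_gt b (d i j') with h' | h'
          · exact h'
          · exact absurd ⟨hcon, h'⟩ (hconsec i j')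
        have := hmin j' (by simp [hb'])
        linarith
      · intro h
        linarith
    rw [hfe] at hc
    have hcc : ∑ j' ∈ univ.filter (fun j' => d i j' ≤ a),
        (d i js - max LB (d i j')) * y j'
        = (d i js - LB) * ∑ j' ∈ univ.filter (fun j' => d i j' ≤ a), y j' := by
      rw [Finset.mul_sum]
      apply Finset.sum_congr rfl
      intro j' hj'
      simp only [mem_filter, mem_univ, true_and] at hj'
      simp only [max_eq_left (hj'.trans hLB1)]
    rw [hcc] at hc
    set s := ∑ j' ∈ univ.filter (fun j' => d i j' ≤ a), y j' with hs
    have hdpos : (0 : ℝ) < d i js - LB := by linarith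
    nlinarith
  · intro h
    refine le_antisymm ?_ (le_csInf hne fun z ⟨_, hy⟩ => hy.2.2.1)
    apply le_of_forall_pos_le_add
    intro η hη
    have hneIJ : (Finset.univ : Finset (I × J)).Nonempty := Finset.univ_nonempty
    set M : ℝ := (Finset.univ.sup' hneIJ (fun q : I × J => d q.1 q.2)) ⊔ (LB + 1) with hM
    have hM1 : LB + 1 ≤ M := le_sup_right
    have hMpos : (0 : ℝ) < M - LB := by linarith
    set ε : ℝ := η / (M - LB) with hεdef
    have hε : 0 < ε := div_pos hη hMpos
    obtain ⟨y, hsum, hbd, hcov⟩ := h ε hε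
    have hmem : (LB + η) ∈ {z : ℝ | ∃ y, PCLBFeas d p LB y z} := by
      refine ⟨y, covers_feas d p a b hconsec LB hLB1 hLB2 y hsum hbd ε hε.le hcov
        (LB + η) (by linarith) ?_⟩
      intro i j _
      have hdM : d i j ≤ M :=
        le_trans (Finset.le_sup' (f := fun q : I × J => d q.1 q.2) (Finset.mem_univ (i, j)))
          le_sup_left
      have h1 : ε * (d i j - LB) ≤ ε * (M - LB) :=
        mul_le_mul_of_nonneg_left (by linarith) hε.le
      have h2 : ε * (M - LB) = η := div_mul_cancel₀ η (ne_of_gt hMpos)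
      linarith
    exact csInf_le hbdd hmem

/-- Let `a = d_k` and `b = d_{k+1}` be two consecutive distinct distance values
(i.e. `a, b ∈ D`, `a < b`, and no distance value lies strictly between them). For any
`LB, LB' ∈ [a, b)`, one has `L(LB) = LB` iff `L(LB') = LB'`. -/
theorem stmt_17 {I J : Type*} [Fintype I] [Fintype J] [Nonempty I] [Nonempty J]
    (d : I → J → ℝ) (hd : ∀ i j, 0 ≤ d i j)
    (p : ℕ) (hp1 : 1 ≤ p) (hp2 : p ≤ Fintype.card J)
    (a b : ℝ) (ha : ∃ i j, d i j = a) (hb : ∃ i j, d i j = b) (hab : a < b)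
    (hconsec : ∀ i j, ¬(a < d i j ∧ d i j < b))
    (LB LB' : ℝ)
    (hLB1 : a ≤ LB) (hLB2 : LB < b)
    (hLB'1 : a ≤ LB') (hLB'2 : LB' < b) :
    (Lval d p LB = LB ↔ Lval d p LB' = LB') :=
  (key_iff d p hp2 a b hab hconsec LB hLB1 hLB2).trans
    (key_iff d p hp2 a b hab hconsec LB' hLB'1 hLB'2).symm
end
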